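/- Let λ₁, λ₂, a₁, b₁ ∈ ℂ with λ₁ ≠ 0, λ₂ ≠ 0, λ₁² + λ₂² − λ₁λ₂ ≠ 0, a₁ ≠ 0, and a₁ − b₁(λ₁ − λ₂)/λ₁ ≠ 0. Set S₁ = [[λ₁, λ₁],[0, λ₂]], S₂ = [[λ₂, 0],[−λ₂, λ₁]], T₁ = [[a₁, b₁],[0, a₁ − b₁(λ₁ − λ₂)/λ₁]], and T₂ = [[a₁ − b₁(λ₁ − λ₂)/λ₁, 0],[−b₁λ₂/λ₁, a₁]]. Then the only subspaces V of ℂ² with S₁V ⊆ V, S₂V ⊆ V, T₁V ⊆ V, and T₂V ⊆ V are V = 0 and V = ℂ²; i.e., the family {S₁, S₂, T₁, T₂} is irreducible. -/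

import Mathlib

open Matrix

lemma two_indep_span (V : Submodule ℂ (Fin 2 → ℂ)) (v w : Fin 2 → ℂ)
    (hv : v ∈ V) (hw : w ∈ V) (hd : v 0 * w 1 - v 1 * w 0 ≠ 0) : V = ⊤ := by
  rw [Submodule.eq_top_iff']
  intro u
  have key : u = ((u 0 * w 1 - u 1 * w 0) / (v 0 * w 1 - v 1 * w 0)) • v
      + ((v 0 * u 1 - v 1 * u 0) / (v 0 * w 1 - v 1 * w 0)) • w := by
    funext i
    fin_cases i <;>
      simp only [Pi.add_apply, Pi.smul_apply, smul_eq_mul, Fin.zero_eta, Fin.mk_one, Fin.isValue] <;>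
      rw [div_mul_eq_mul_div, div_mul_eq_mul_div, ← add_div, eq_div_iff hd] <;> ring
  rw [key]
  exact V.add_mem (V.smul_mem _ hv) (V.smul_mem _ hw)

theorem SB3_dim2_extension_irreducible (l1 l2 a1 b1 : ℂ)
    (h1 : l1 ≠ 0) (h2 : l2 ≠ 0) (h3 : l1 ^ 2 + l2 ^ 2 - l1 * l2 ≠ 0)
    (ha1 : a1 ≠ 0) (hd1 : a1 - b1 * (l1 - l2) / l1 ≠ 0) :
    ∀ V : Submodule ℂ (Fin 2 → ℂ),
      ((∀ v ∈ V, (!![l1, l1; 0, l2]).mulVec v ∈ V) ∧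
       (∀ v ∈ V, (!![l2, 0; -l2, l1]).mulVec v ∈ V) ∧
       (∀ v ∈ V, (!![a1, b1; 0, a1 - b1 * (l1 - l2) / l1]).mulVec v ∈ V) ∧
       (∀ v ∈ V, (!![a1 - b1 * (l1 - l2) / l1, 0; -(b1 * l2 / l1), a1]).mulVec v ∈ V)) →
      V = ⊥ ∨ V = ⊤ := by
  intro V ⟨hS1, hS2, _, _⟩
  by_cases hV : V = ⊥
  · exact Or.inl hV
  right
  obtain ⟨v, hv, hv0⟩ := Submodule.exists_mem_ne_zero_of_ne_bot hV
  have hS1v : (!![l1, l1; 0, l2]).mulVec v = ![l1 * v 0 + l1 * v 1, l2 * v 1] := by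
    funext i; fin_cases i <;>
      simp [Matrix.mulVec, dotProduct, Fin.sum_univ_two, Matrix.vecHead, Matrix.vecTail]
  have hS2v : (!![l2, 0; -l2, l1]).mulVec v = ![l2 * v 0, -l2 * v 0 + l1 * v 1] := by
    funext i; fin_cases i <;>
      simp [Matrix.mulVec, dotProduct, Fin.sum_univ_two, Matrix.vecHead, Matrix.vecTail]
  have h1v : (![l1 * v 0 + l1 * v 1, l2 * v 1] : Fin 2 → ℂ) ∈ V := by
    rw [← hS1v]; exact hS1 v hv
  have h2v : (![l2 * v 0, -l2 * v 0 + l1 * v 1] : Fin 2 → ℂ) ∈ V := by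
    rw [← hS2v]; exact hS2 v hv
  by_cases hy : v 1 = 0
  · -- v 0 ≠ 0, use v and S₂ v
    have hx : v 0 ≠ 0 := by
      intro hx; apply hv0; funext i; fin_cases i <;> simp [hx, hy]
    refine two_indep_span V v _ hv h2v ?_
    simp only [Matrix.cons_val_zero, Matrix.cons_val_one, Matrix.head_cons, hy]
    intro h; apply h2
    have : v 0 * (-l2 * v 0) = 0 := by linear_combination h
    rcases mul_eq_zero.1 this with h' | h'
    · exact absurd h' hx
    · rcases mul_eq_zero.1 h' with h'' | h''
      · exact neg_eq_zero.1 h''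
      · exact absurd h'' hx
  · by_cases hc : (l1 - l2) * v 0 + l1 * v 1 = 0
    · -- use v and S₂ v
      have hx : v 0 ≠ 0 := by
        intro hx
        apply hy
        have : l1 * v 1 = 0 := by linear_combination hc - (l1 - l2) * hx
        exact (mul_eq_zero.1 this).resolve_left h1
      refine two_indep_span V v _ hv h2v ?_
      simp only [Matrix.cons_val_zero, Matrix.cons_val_one, Matrix.head_cons]
      intro h
      have hdet : v 0 * v 0 * (l1 ^ 2 + l2 ^ 2 - l1 * l2) = 0 := by
        linear_combination (-l1) * h + (l1 - l2) * v 0 * hc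
      rcases mul_eq_zero.1 hdet with h' | h'
      · exact hx (by rcases mul_eq_zero.1 h' with h'' | h'' <;> exact h'')
      · exact h3 h'
    · -- use v and S₁ v
      refine two_indep_span V v _ hv h1v ?_
      simp only [Matrix.cons_val_zero, Matrix.cons_val_one, Matrix.head_cons]
      intro h
      apply hc
      have : -(v 1) * ((l1 - l2) * v 0 + l1 * v 1) = 0 := by linear_combination h
      rcases mul_eq_zero.1 this with h' | h'
      · exact absurd (neg_eq_zero.1 h') hy
      · exact absurd h' hc
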